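/- Let α ≤ q_i(k) ≤ β with α > 0 for all band entries of a sequence of tridiagonal generators Q_k, let 0 < Δ < 1/(2β), set γ = min{Δα, 1 − 2Δβ} > 0, and let L_k = I_N + Δ Q_k. Then the product L_{N-2} ⋯ L_1 L_0 of any N−1 such matrices has every entry at least γ^{N-1}; in particular it maps the probability simplex Σ_N into Σ_N(γ) = {p ∈ Σ_N : p_i ≥ γ^{N-1}}. -/

import Mathlib

lemma sum_if_coe_eq (N m : ℕ) (c : ℝ) :
    ∑ i : Fin N, (if (i : ℕ) = m then c else 0) = if m < N then c else 0 := by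
  split_ifs with h
  · rw [Finset.sum_eq_single (⟨m, h⟩ : Fin N)]
    · simp
    · intro b _ hb
      have : (b : ℕ) ≠ m := fun he => hb (Fin.ext (by simpa using he))
      simp [this]
    · simp
  · apply Finset.sum_eq_zero
    intro i _
    have hi := i.isLt
    have : (i : ℕ) ≠ m := by omega
    simp [this]

lemma sum_if_coe_succ (N m : ℕ) (c : ℝ) :
    ∑ i : Fin N, (if (i : ℕ) + 1 = m then c else 0) = if 1 ≤ m ∧ m ≤ N then c else 0 := by
  split_ifs with h
  · rw [Finset.sum_eq_single (⟨m - 1, by omega⟩ : Fin N)]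
    · simp; omega
    · intro b _ hb
      have : (b : ℕ) + 1 ≠ m := fun he => hb (Fin.ext (by simp; omega))
      simp [this]
    · simp
  · apply Finset.sum_eq_zero
    intro i _
    have hi := i.isLt
    have : (i : ℕ) + 1 ≠ m := by omega
    simp [this]

lemma prod_band {N : ℕ} {γ : ℝ} (hγ : 0 < γ) (Ls : List (Matrix (Fin N) (Fin N) ℝ))
    (h : ∀ A ∈ Ls, (∀ i j : Fin N, 0 ≤ A i j) ∧
      (∀ i j : Fin N, (i : ℕ) ≤ (j : ℕ) + 1 → (j : ℕ) ≤ (i : ℕ) + 1 → γ ≤ A i j) ∧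
      (∀ j, ∑ i, A i j = 1)) :
    (∀ i j : Fin N, 0 ≤ Ls.prod i j) ∧
    (∀ j, ∑ i, Ls.prod i j = 1) ∧
    (∀ i j : Fin N, (i : ℕ) ≤ (j : ℕ) + Ls.length → (j : ℕ) ≤ (i : ℕ) + Ls.length →
      γ ^ Ls.length ≤ Ls.prod i j) := by
  induction Ls with
  | nil =>
    refine ⟨?_, ?_, ?_⟩
    · intro i j
      rw [List.prod_nil, Matrix.one_apply]
      split_ifs <;> norm_num
    · intro j; simp [Matrix.one_apply]
    · intro i j h1 h2
      have : i = j := Fin.ext (by simp at h1 h2; omega)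
      simp [this, Matrix.one_apply]
  | cons A Ls ih =>
    have hA := h A List.mem_cons_self
    obtain ⟨ih0, ih1, ih2⟩ := ih (fun B hB => h B (List.mem_cons_of_mem _ hB))
    refine ⟨?_, ?_, ?_⟩
    · intro i j
      rw [List.prod_cons, Matrix.mul_apply]
      exact Finset.sum_nonneg fun m _ => mul_nonneg (hA.1 i m) (ih0 m j)
    · intro j
      rw [List.prod_cons]
      simp only [Matrix.mul_apply]
      rw [Finset.sum_comm]
      have : ∀ m : Fin N, ∑ i, A i m * Ls.prod m j = Ls.prod m j := by
        intro m
        rw [← Finset.sum_mul, hA.2.2 m, one_mul]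
      rw [Finset.sum_congr rfl fun m _ => this m, ih1 j]
    · intro i j hi hj
      simp only [List.length_cons] at hi hj ⊢
      have hiN := i.isLt
      have hjN := j.isLt
      set n := Ls.length with hn
      have hm : ∃ m : Fin N, (i : ℕ) ≤ (m : ℕ) + 1 ∧ (m : ℕ) ≤ (i : ℕ) + 1 ∧
          (m : ℕ) ≤ (j : ℕ) + n ∧ (j : ℕ) ≤ (m : ℕ) + n := by
        rcases le_or_gt (i : ℕ) (j : ℕ) with hle | hlt
        · rcases le_or_gt (j : ℕ) ((i : ℕ) + 1) with h1 | h1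
          · exact ⟨j, by omega, by omega, by omega, by omega⟩
          · refine ⟨⟨(i : ℕ) + 1, by omega⟩, ?_, ?_, ?_, ?_⟩ <;>
              · simp only [Fin.val_mk]; omega
        · refine ⟨⟨(i : ℕ) - 1, by omega⟩, ?_, ?_, ?_, ?_⟩ <;>
            · simp only [Fin.val_mk]; omega
      obtain ⟨m, hm1, hm2, hm3, hm4⟩ := hm
      rw [List.prod_cons, Matrix.mul_apply]
      calc γ ^ (n + 1) = γ * γ ^ n := by ring
      _ ≤ A i m * Ls.prod m j :=
        mul_le_mul (hA.2.1 i m hm1 hm2) (ih2 m j hm3 hm4) (pow_nonneg hγ.le n) (hA.1 i m)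
      _ ≤ ∑ m', A i m' * Ls.prod m' j :=
        Finset.single_le_sum (fun m' _ => mul_nonneg (hA.1 i m') (ih0 m' j))
          (Finset.mem_univ m)



/-- Given tridiagonal generators `Q k` with band entries
`q k i ∈ [α, β]` (`α > 0`), `0 < Δ < 1/(2β)` and
`γ = min (Δα) (1 - 2Δβ) > 0`, the product `L_{N-2} ⋯ L_1 L_0` of the `N-1`
matrices `L k = I + Δ • Q k` has every entry at least `γ^{N-1}`; in
particular it maps the probability simplex `Σ_N` into
`Σ_N(γ) = {p ∈ Σ_N : pᵢ ≥ γ^{N-1}}`. -/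
theorem product_of_transition_matrices_positive
    (N : ℕ) (hN : 2 ≤ N) (q : ℕ → ℕ → ℝ) (α β Δ γ : ℝ)
    (hα : 0 < α) (hαβ : α ≤ β) (hΔpos : 0 < Δ) (hΔ : Δ < 1 / (2 * β))
    (hγ : γ = min (Δ * α) (1 - 2 * Δ * β))
    (hq0 : ∀ k, q k 0 = 0) (hqtop : ∀ k, q k (2 * N - 1) = 0)
    (hqα : ∀ k, ∀ i : ℕ, 1 ≤ i → i ≤ 2 * N - 2 → α ≤ q k i)
    (hqβ : ∀ k, ∀ i : ℕ, 1 ≤ i → i ≤ 2 * N - 2 → q k i ≤ β)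
    (Q : ℕ → Matrix (Fin N) (Fin N) ℝ)
    (hQ : ∀ k, ∀ i j : Fin N, Q k i j =
      if (i : ℕ) = (j : ℕ) then -(q k (2 * (j : ℕ)) + q k (2 * (j : ℕ) + 1))
      else if (i : ℕ) = (j : ℕ) + 1 then q k (2 * (j : ℕ) + 1)
      else if (i : ℕ) + 1 = (j : ℕ) then q k (2 * (j : ℕ))
      else 0)
    (L : ℕ → Matrix (Fin N) (Fin N) ℝ)
    (hL : ∀ k, L k = (1 : Matrix (Fin N) (Fin N) ℝ) + Δ • Q k)
    (P : Matrix (Fin N) (Fin N) ℝ)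
    (hP : P = (List.ofFn (fun k : Fin (N - 1) => L (N - 2 - (k : ℕ)))).prod) :
    (∀ i j, γ ^ (N - 1) ≤ P i j) ∧
    (∀ p : Fin N → ℝ, (∑ j, p j = 1 ∧ ∀ j, 0 ≤ p j) →
      (∑ j, P.mulVec p j = 1 ∧ ∀ j, γ ^ (N - 1) ≤ P.mulVec p j)) := by
  have hβ : 0 < β := hα.trans_le hαβ
  have hΔβ : Δ * (2 * β) < 1 := (lt_div_iff₀ (by positivity)).mp hΔ
  have hγpos : 0 < γ := by
    rw [hγ]
    exact lt_min (mul_pos hΔpos hα) (by nlinarith)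
  -- bounds on q in the whole range
  have hqub : ∀ k i, i ≤ 2 * N - 1 → q k i ≤ β := by
    intro k i hi
    rcases Nat.eq_zero_or_pos i with h0 | h1
    · rw [h0, hq0]; exact hβ.le
    rcases eq_or_lt_of_le hi with htop | hlt
    · rw [htop, hqtop]; exact hβ.le
    · exact hqβ k i h1 (by omega)
  -- entry formula for L
  have hLentry : ∀ k (i j : Fin N),
      L k i j = (if i = j then (1 : ℝ) else 0) + Δ * Q k i j := by
    intro k i j
    rw [hL]
    simp [Matrix.add_apply, Matrix.one_apply, Matrix.smul_apply, smul_eq_mul]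
  -- band lower bound for L
  have hLband : ∀ k (i j : Fin N), (i : ℕ) ≤ (j : ℕ) + 1 → (j : ℕ) ≤ (i : ℕ) + 1 →
      γ ≤ L k i j := by
    intro k i j h1 h2
    have hiN := i.isLt
    have hjN := j.isLt
    rcases Nat.lt_trichotomy (i : ℕ) (j : ℕ) with hlt | heq | hgt
    · -- j = i + 1, subdiagonal entry seen from column j: (i:ℕ)+1 = j
      have hij : (i : ℕ) + 1 = (j : ℕ) := by omega
      have hne : ¬ (i : ℕ) = (j : ℕ) := by omega
      have hne2 : ¬ (i : ℕ) = (j : ℕ) + 1 := by omega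
      rw [hLentry, hQ, if_neg (fun h : i = j => hne (by rw [h])), if_neg hne, if_neg hne2,
        if_pos hij]
      have hb : α ≤ q k (2 * (j : ℕ)) := hqα k _ (by omega) (by omega)
      have : Δ * α ≤ Δ * q k (2 * (j : ℕ)) := mul_le_mul_of_nonneg_left hb hΔpos.le
      calc γ ≤ Δ * α := hγ ▸ min_le_left _ _
      _ ≤ Δ * q k (2 * (j : ℕ)) := this
      _ = 0 + Δ * q k (2 * (j : ℕ)) := by ring
    · -- diagonal
      have hij : i = j := Fin.ext heq
      rw [hLentry, hQ, if_pos hij, if_pos heq]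
      have b1 : q k (2 * (j : ℕ)) ≤ β := hqub k _ (by omega)
      have b2 : q k (2 * (j : ℕ) + 1) ≤ β := hqub k _ (by omega)
      have : γ ≤ 1 - 2 * Δ * β := hγ ▸ min_le_right _ _
      nlinarith
    · -- i = j + 1, superdiagonal entry from column j: i = j+1
      have hij : (i : ℕ) = (j : ℕ) + 1 := by omega
      have hne : ¬ (i : ℕ) = (j : ℕ) := by omega
      rw [hLentry, hQ, if_neg (fun h : i = j => hne (by rw [h])), if_neg hne, if_pos hij]
      have hb : α ≤ q k (2 * (j : ℕ) + 1) := hqα k _ (by omega) (by omega)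
      have : Δ * α ≤ Δ * q k (2 * (j : ℕ) + 1) := mul_le_mul_of_nonneg_left hb hΔpos.le
      calc γ ≤ Δ * α := hγ ▸ min_le_left _ _
      _ ≤ Δ * q k (2 * (j : ℕ) + 1) := this
      _ = 0 + Δ * q k (2 * (j : ℕ) + 1) := by ring
  -- nonnegativity of L
  have hLnn : ∀ k (i j : Fin N), 0 ≤ L k i j := by
    intro k i j
    by_cases hb : (i : ℕ) ≤ (j : ℕ) + 1 ∧ (j : ℕ) ≤ (i : ℕ) + 1
    · exact hγpos.le.trans (hLband k i j hb.1 hb.2)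
    · push_neg at hb
      have h1 : ¬ (i : ℕ) = (j : ℕ) := by omega
      have h2 : ¬ (i : ℕ) = (j : ℕ) + 1 := by omega
      have h3 : ¬ (i : ℕ) + 1 = (j : ℕ) := by omega
      rw [hLentry, hQ, if_neg (fun h : i = j => h1 (by rw [h])), if_neg h1, if_neg h2,
        if_neg h3]
      simp
  -- column sums of Q are zero
  have hQsum : ∀ k (j : Fin N), ∑ i, Q k i j = 0 := by
    intro k j
    have hjN := j.isLt
    have hsplit : ∀ i : Fin N, Q k i j =
        (if (i : ℕ) = (j : ℕ) then -(q k (2 * (j : ℕ)) + q k (2 * (j : ℕ) + 1)) else 0)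
        + (if (i : ℕ) = (j : ℕ) + 1 then q k (2 * (j : ℕ) + 1) else 0)
        + (if (i : ℕ) + 1 = (j : ℕ) then q k (2 * (j : ℕ)) else 0) := by
      intro i
      rw [hQ]
      split_ifs <;> first | ring1 | (exfalso; omega)
    rw [Finset.sum_congr rfl fun i _ => hsplit i, Finset.sum_add_distrib,
      Finset.sum_add_distrib, sum_if_coe_eq, sum_if_coe_eq, sum_if_coe_succ]
    by_cases hj1 : (j : ℕ) + 1 < N
    · by_cases hj0 : 1 ≤ (j : ℕ)
      · rw [if_pos hjN, if_pos hj1, if_pos ⟨hj0, hjN.le⟩]; ring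
      · have hj0' : (j : ℕ) = 0 := by omega
        rw [if_pos hjN, if_pos hj1, if_neg (by omega), hj0']
        simp [hq0]
    · have hje : (j : ℕ) = N - 1 := by omega
      rw [if_pos hjN, if_neg hj1, if_pos ⟨by omega, hjN.le⟩]
      have h21 : 2 * (j : ℕ) + 1 = 2 * N - 1 := by omega
      rw [h21, hqtop]
      ring
  -- column sums of L are one
  have hLsum : ∀ k (j : Fin N), ∑ i, L k i j = 1 := by
    intro k j
    rw [Finset.sum_congr rfl fun i _ => hLentry k i j, Finset.sum_add_distrib,
      ← Finset.mul_sum, hQsum, mul_zero, add_zero]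
    simp
  -- apply the band lemma
  set Ls := List.ofFn (fun k : Fin (N - 1) => L (N - 2 - (k : ℕ))) with hLs
  have hmem : ∀ A ∈ Ls, (∀ i j : Fin N, 0 ≤ A i j) ∧
      (∀ i j : Fin N, (i : ℕ) ≤ (j : ℕ) + 1 → (j : ℕ) ≤ (i : ℕ) + 1 → γ ≤ A i j) ∧
      (∀ j, ∑ i, A i j = 1) := by
    intro A hA
    rw [hLs, List.mem_ofFn] at hA
    obtain ⟨k, rfl⟩ := hA
    exact ⟨hLnn _, hLband _, hLsum _⟩
  obtain ⟨P0, P1, P2⟩ := prod_band hγpos Ls hmem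
  have hlen : Ls.length = N - 1 := by simp [hLs]
  rw [hlen] at P2
  have hPent : ∀ i j : Fin N, γ ^ (N - 1) ≤ P i j := by
    intro i j
    have hiN := i.isLt
    have hjN := j.isLt
    rw [hP]
    exact P2 i j (by omega) (by omega)
  have hPnn : ∀ i j : Fin N, 0 ≤ P i j := fun i j =>
    (pow_nonneg hγpos.le _).trans (hPent i j)
  have hPsum : ∀ j, ∑ i, P i j = 1 := by intro j; rw [hP]; exact P1 j
  refine ⟨hPent, ?_⟩
  intro p ⟨hp1, hp0⟩
  constructor
  · simp only [Matrix.mulVec, dotProduct]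
    rw [Finset.sum_comm]
    have : ∀ i : Fin N, ∑ j, P j i * p i = p i := by
      intro i
      rw [← Finset.sum_mul, hPsum, one_mul]
    rw [Finset.sum_congr rfl fun i _ => this i, hp1]
  · intro j
    have : γ ^ (N - 1) = ∑ i, γ ^ (N - 1) * p i := by
      rw [← Finset.mul_sum, hp1, mul_one]
    rw [this]
    simp only [Matrix.mulVec, dotProduct]
    exact Finset.sum_le_sum fun i _ =>
      mul_le_mul_of_nonneg_right (hPent j i) (hp0 i)
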